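/- For every η ∈ (0, 1/2] there exists a constant n₀ (depending only on η) such that for every finite undirected simple graph G, every digraph H with |V(H)| ≥ |V(G)| ≥ n₀, and every linear order σ on V(G), the random σ-lexicographic-product instance D^σ_G[H] — obtained by choosing the orientation in condition (ii) independently and uniformly at random for each edge {u,v} ∈ E(G) and each pair (a,b) ∈ V(H)² — is η-good for (G, H) with probability at least 1 − η². -/

import Mathlib

open scoped Classical

/-- A set `S` of vertices of the digraph with arc relation `A` is acyclic. -/
def AcyclicSet {V : Type*} (A : V → V → Prop) (S : Set V) : Prop :=
  ∀ x, ¬ Relation.TransGen (fun a b => a ∈ S ∧ b ∈ S ∧ A a b) x x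

/-- The digraph `D` on `V(G) × V(H)` is `η`-good for `(G, H)`: for every edge `{u,v}`
of `G` and all subsets `A_u` of the cloud of `u` and `A_v` of the cloud of `v` with
`|A_u|, |A_v| ≥ |V(H)|^η`, the induced subdigraph `D[A_u ∪ A_v]` contains a directed
cycle. -/
def EtaGood {α β : Type*} [Fintype β] (G : SimpleGraph α)
    (D : α × β → α × β → Prop) (η : ℝ) : Prop :=
  ∀ u v : α, G.Adj u v → ∀ Au Av : Finset (α × β),
    (∀ p ∈ Au, p.1 = u) → (∀ p ∈ Av, p.1 = v) →
    (Fintype.card β : ℝ) ^ η ≤ (Au.card : ℝ) →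
    (Fintype.card β : ℝ) ^ η ≤ (Av.card : ℝ) →
    ¬ AcyclicSet D (↑Au ∪ ↑Av)

/-- The `σ`-lexicographic-product instance of `(G, H)` determined by the family of
coin flips `o` (one boolean for each edge of `G` and each pair of `H`-vertices):
(i) inside a cloud, arcs are given by `H`;
(ii) between clouds of `G`-adjacent vertices, the orientation of each arc is given by
     the corresponding coin flip;
(iii) between clouds of nonadjacent vertices, all arcs go from the `σ`-smaller cloud
      to the `σ`-larger cloud (`σ` being the linear order on `V(G)`). -/
def randInst {α β : Type*} [LinearOrder α] (G : SimpleGraph α) (HA : β → β → Prop)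
    (o : α → α → β → β → Bool) : α × β → α × β → Prop :=
  fun p q =>
    (p.1 = q.1 ∧ HA p.2 q.2) ∨
    (G.Adj p.1 q.1 ∧ ((p.1 < q.1 ∧ o p.1 q.1 p.2 q.2 = true) ∨
                      (q.1 < p.1 ∧ o q.1 p.1 q.2 p.2 = false))) ∨
    (¬ G.Adj p.1 q.1 ∧ p.1 < q.1)

def Cross {α β : Type} (u v : α) (Su Sv : Finset β) (f : β → β → Bool) :
    (α × β) → (α × β) → Prop :=
  fun p q =>
    (p.1 = u ∧ q.1 = v ∧ p.2 ∈ Su ∧ q.2 ∈ Sv ∧ f p.2 q.2 = true) ∨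
    (p.1 = v ∧ q.1 = u ∧ p.2 ∈ Sv ∧ q.2 ∈ Su ∧ f q.2 p.2 = false)

lemma exists_rank {α β : Type} [DecidableEq α] [DecidableEq β]
    (u v : α) (Su Sv : Finset β) (f : β → β → Bool)
    (hac : ∀ x, ¬ Relation.TransGen (Cross u v Su Sv f) x x) :
    ∃ h : α × β → ℕ,
      (∀ a ∈ Su, h (u, a) < Su.card + Sv.card) ∧
      (∀ b ∈ Sv, h (v, b) < Su.card + Sv.card) ∧
      (∀ a ∈ Su, ∀ b ∈ Sv, f a b = decide (h (u, a) < h (v, b))) := by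
  classical
  set R := Cross u v Su Sv f with hRdef
  have hR_ne : ∀ {x y : α × β}, R x y → x ≠ y := by
    intro x y hxy h
    subst h
    exact hac x (Relation.TransGen.single hxy)
  let le : (α × β) → (α × β) → Prop := fun x y => x = y ∨ Relation.TransGen R x y
  haveI hpo : IsPartialOrder (α × β) le :=
    { refl := fun x => Or.inl rfl
      trans := by
        rintro x y z (rfl | h) (rfl | h')
        · exact Or.inl rfl
        · exact Or.inr h'
        · exact Or.inr h
        · exact Or.inr (h.trans h')
      antisymm := by
        rintro x y (rfl | h) (h' | h'')
        · rfl
        · rfl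
        · exact h'.symm
        · exact absurd (h.trans h'') (hac x) }
  obtain ⟨t, hlin, hle⟩ := extend_partialOrder le
  haveI := hlin
  have htrans : ∀ {x y z}, t x y → t y z → t x z := fun hxy hyz =>
    hlin.toIsPartialOrder.toIsPreorder.toIsTrans.trans _ _ _ hxy hyz
  have hanti : ∀ {x y}, t x y → t y x → x = y := fun hxy hyx =>
    hlin.toIsPartialOrder.toAntisymm.antisymm _ _ hxy hyx
  set S : Finset (α × β) := Su.image (fun a => (u, a)) ∪ Sv.image (fun b => (v, b)) with hSdef
  set h : α × β → ℕ := fun x => (S.filter (fun y => t y x ∧ y ≠ x)).card with hhdef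
  have hcardS : S.card ≤ Su.card + Sv.card := by
    calc S.card ≤ (Su.image (fun a => (u, a))).card + (Sv.image (fun b => (v, b))).card :=
          Finset.card_union_le _ _
      _ ≤ Su.card + Sv.card := by
          gcongr <;> exact Finset.card_image_le
  have hbound : ∀ x ∈ S, h x < Su.card + Sv.card := by
    intro x hx
    have h1 : (S.filter (fun y => t y x ∧ y ≠ x)) ⊆ S.erase x := by
      intro y hy
      simp only [Finset.mem_filter] at hy
      exact Finset.mem_erase.2 ⟨hy.2.2, hy.1⟩
    calc h x ≤ (S.erase x).card := Finset.card_le_card h1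
      _ < S.card := Finset.card_erase_lt_of_mem hx
      _ ≤ Su.card + Sv.card := hcardS
  have hmono : ∀ x ∈ S, ∀ y ∈ S, R x y → h x < h y := by
    intro x hx y hy hR
    have hxy : x ≠ y := hR_ne hR
    have htxy : t x y := hle _ _ (Or.inr (Relation.TransGen.single hR))
    apply Finset.card_lt_card
    constructor
    · intro z hz
      simp only [Finset.mem_filter] at hz ⊢
      refine ⟨hz.1, htrans hz.2.1 htxy, ?_⟩
      rintro rfl
      exact hxy (hanti htxy hz.2.1)
    · intro hsub
      have hxmem : x ∈ S.filter (fun z => t z y ∧ z ≠ y) := by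
        simp only [Finset.mem_filter]
        exact ⟨hx, htxy, hxy⟩
      have := hsub hxmem
      simp only [Finset.mem_filter] at this
      exact this.2.2 rfl
  refine ⟨h, ?_, ?_, ?_⟩
  · intro a ha
    exact hbound _ (Finset.mem_union_left _ (Finset.mem_image_of_mem _ ha))
  · intro b hb
    exact hbound _ (Finset.mem_union_right _ (Finset.mem_image_of_mem _ hb))
  · intro a ha b hb
    have hua : (u, a) ∈ S := Finset.mem_union_left _ (Finset.mem_image_of_mem _ ha)
    have hvb : (v, b) ∈ S := Finset.mem_union_right _ (Finset.mem_image_of_mem _ hb)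
    cases hfab : f a b with
    | true =>
      have : R (u, a) (v, b) := Or.inl ⟨rfl, rfl, ha, hb, hfab⟩
      simp [hmono _ hua _ hvb this]
    | false =>
      have : R (v, b) (u, a) := Or.inr ⟨rfl, rfl, hb, ha, hfab⟩
      have := hmono _ hvb _ hua this
      simp [Nat.not_lt.2 (le_of_lt this)]

lemma count_bad {α β : Type} [Fintype α] [Fintype β] [DecidableEq α] [DecidableEq β]
    (u v : α) (Su Sv : Finset β) (s : ℕ) (hs : 0 < s) (hSu : Su.card = s) (hSv : Sv.card = s) :
    (Finset.univ.filter (fun o : α → α → β → β → Bool =>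
        ∀ x, ¬ Relation.TransGen (Cross u v Su Sv (fun a b => o u v a b)) x x)).card
      * 2 ^ (s * s)
    ≤ (2 * s) ^ (2 * s) * Fintype.card (α → α → β → β → Bool) := by
  classical
  set O := α → α → β → β → Bool with hO
  have h2s : 0 < 2 * s := by omega
  -- property of a rank function for o
  set P : O → (α × β → ℕ) → Prop := fun o g =>
    (∀ a ∈ Su, ∀ b ∈ Sv, o u v a b = decide (g (u, a) < g (v, b))) ∧
    (∀ a ∈ Su, g (u, a) < 2 * s) ∧ (∀ b ∈ Sv, g (v, b) < 2 * s) with hP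
  set ρ : O → ({a // a ∈ Su} ⊕ {b // b ∈ Sv} → Fin (2 * s)) := fun o =>
    if hex : ∃ g, P o g then
      Sum.elim (fun a => ⟨hex.choose (u, a.1), hex.choose_spec.2.1 a.1 a.2⟩)
               (fun b => ⟨hex.choose (v, b.1), hex.choose_spec.2.2 b.1 b.2⟩)
    else fun _ => ⟨0, h2s⟩ with hρ
  have hρ_spec : ∀ o : O, (∃ g, P o g) → ∀ (a : {a // a ∈ Su}) (b : {b // b ∈ Sv}),
      o u v a.1 b.1 = decide (ρ o (Sum.inl a) < ρ o (Sum.inr b)) := by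
    intro o hex a b
    simp only [hρ, dif_pos hex, Sum.elim_inl, Sum.elim_inr, Fin.mk_lt_mk]
    exact hex.choose_spec.1 a.1 a.2 b.1 b.2
  set A : Finset O := Finset.univ.filter (fun o : O =>
      ∀ x, ¬ Relation.TransGen (Cross u v Su Sv (fun a b => o u v a b)) x x) with hA
  have hAex : ∀ o ∈ A, ∃ g, P o g := by
    intro o ho
    simp only [hA, Finset.mem_filter] at ho
    obtain ⟨g, hg1, hg2, hg3⟩ := exists_rank u v Su Sv (fun a b => o u v a b) ho.2
    refine ⟨g, hg3, ?_, ?_⟩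
    · intro a ha; have := hg1 a ha; omega
    · intro b hb; have := hg2 b hb; omega
  set ψ : O × ({a // a ∈ Su} × {b // b ∈ Sv} → Bool) → ({a // a ∈ Su} ⊕ {b // b ∈ Sv} → Fin (2 * s)) × O := fun p =>
    (ρ p.1, fun w x a b =>
      if h : w = u ∧ x = v ∧ a ∈ Su ∧ b ∈ Sv then p.2 (⟨a, h.2.2.1⟩, ⟨b, h.2.2.2⟩)
      else p.1 w x a b) with hψ
  have hinj : Set.InjOn ψ (A ×ˢ (Finset.univ : Finset ({a // a ∈ Su} × {b // b ∈ Sv} → Bool))) := by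
    rintro ⟨o₁, δ₁⟩ h₁ ⟨o₂, δ₂⟩ h₂ heq
    simp only [Finset.coe_product, Set.mem_prod, Finset.mem_coe] at h₁ h₂
    have hex₁ := hAex o₁ h₁.1
    have hex₂ := hAex o₂ h₂.1
    have hρeq : ρ o₁ = ρ o₂ := congrArg Prod.fst heq
    have hupd : (fun w x a b =>
        if h : w = u ∧ x = v ∧ a ∈ Su ∧ b ∈ Sv then δ₁ (⟨a, h.2.2.1⟩, ⟨b, h.2.2.2⟩)
        else o₁ w x a b) = (fun w x a b =>
        if h : w = u ∧ x = v ∧ a ∈ Su ∧ b ∈ Sv then δ₂ (⟨a, h.2.2.1⟩, ⟨b, h.2.2.2⟩)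
        else o₂ w x a b) := congrArg Prod.snd heq
    have hδ : δ₁ = δ₂ := by
      funext q
      obtain ⟨a, b⟩ := q
      have := congrFun (congrFun (congrFun (congrFun hupd u) v) a.1) b.1
      have hc : u = u ∧ v = v ∧ a.1 ∈ Su ∧ b.1 ∈ Sv := ⟨rfl, rfl, a.2, b.2⟩
      rwa [dif_pos hc, dif_pos hc] at this
    have ho : o₁ = o₂ := by
      funext w x a b
      by_cases hc : w = u ∧ x = v ∧ a ∈ Su ∧ b ∈ Sv
      · obtain ⟨rfl, rfl, ha, hb⟩ := hc
        rw [hρ_spec o₁ hex₁ ⟨a, ha⟩ ⟨b, hb⟩, hρ_spec o₂ hex₂ ⟨a, ha⟩ ⟨b, hb⟩, hρeq]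
      · have := congrFun (congrFun (congrFun (congrFun hupd w) x) a) b
        rwa [dif_neg hc, dif_neg hc] at this
    rw [hδ, ho]
  have hcard := Finset.card_le_card_of_injOn (s := A ×ˢ (Finset.univ : Finset ({a // a ∈ Su} × {b // b ∈ Sv} → Bool)))
    (t := (Finset.univ : Finset (({a // a ∈ Su} ⊕ {b // b ∈ Sv} → Fin (2 * s)) × O))) ψ
    (fun p _ => Finset.mem_univ (ψ p)) (by rw [Finset.coe_product]; exact hinj)
  rw [Finset.card_product, Finset.card_univ, Finset.card_univ] at hcard
  have hRgcard : Fintype.card ({a // a ∈ Su} × {b // b ∈ Sv} → Bool) = 2 ^ (s * s) := by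
    rw [Fintype.card_fun, Fintype.card_bool, Fintype.card_prod,
      Fintype.card_coe, Fintype.card_coe, hSu, hSv]
  have hFOcard : Fintype.card ((({a // a ∈ Su} ⊕ {b // b ∈ Sv} → Fin (2 * s))) × O)
      = (2 * s) ^ (2 * s) * Fintype.card O := by
    rw [Fintype.card_prod, Fintype.card_fun, Fintype.card_fin, Fintype.card_sum,
      Fintype.card_coe, Fintype.card_coe, hSu, hSv]
    ring_nf
  rw [hRgcard, hFOcard] at hcard
  exact hcard

lemma cross_of_acyclic {α β : Type} [LinearOrder α] (G : SimpleGraph α) (HA : β → β → Prop)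
    (o : α → α → β → β → Bool) (u v : α) (huv : u < v) (hadj : G.Adj u v)
    (Au Av : Finset (α × β)) (Su Sv : Finset β)
    (hSu : ∀ a ∈ Su, (u, a) ∈ Au) (hSv : ∀ b ∈ Sv, (v, b) ∈ Av)
    (hac : AcyclicSet (randInst G HA o) (↑Au ∪ ↑Av)) :
    ∀ x, ¬ Relation.TransGen (Cross u v Su Sv (fun a b => o u v a b)) x x := by
  intro x hx
  refine hac x (Relation.TransGen.mono ?_ x x hx)
  rintro p q (⟨hp, hq, hpa, hqb, hf⟩ | ⟨hp, hq, hpb, hqa, hf⟩)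
  · have hpmem : p ∈ Au := by
      have : p = (u, p.2) := Prod.ext hp rfl
      rw [this]; exact hSu _ hpa
    have hqmem : q ∈ Av := by
      have : q = (v, q.2) := Prod.ext hq rfl
      rw [this]; exact hSv _ hqb
    refine ⟨Set.mem_union_left _ hpmem, Set.mem_union_right _ hqmem, ?_⟩
    refine Or.inr (Or.inl ⟨by rw [hp, hq]; exact hadj, Or.inl ⟨by rw [hp, hq]; exact huv, ?_⟩⟩)
    rw [hp, hq]; exact hf
  · have hpmem : p ∈ Av := by
      have : p = (v, p.2) := Prod.ext hp rfl
      rw [this]; exact hSv _ hpb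
    have hqmem : q ∈ Au := by
      have : q = (u, q.2) := Prod.ext hq rfl
      rw [this]; exact hSu _ hqa
    refine ⟨Set.mem_union_right _ hpmem, Set.mem_union_left _ hqmem, ?_⟩
    refine Or.inr (Or.inl ⟨by rw [hp, hq]; exact hadj.symm, Or.inr ⟨by rw [hp, hq]; exact huv, ?_⟩⟩)
    rw [hp, hq]; exact hf

lemma exists_n0 (η : ℝ) (hη0 : 0 < η) (C' : ℕ) :
    ∃ n₀ : ℕ, 2 ≤ n₀ ∧ ∀ m : ℕ, n₀ ≤ m →
      (8 * ((Nat.log 2 m : ℝ) + 1) + C') ≤ (m : ℝ) ^ η := by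
  have hlog2 : 0 < Real.log 2 := Real.log_pos (by norm_num)
  set c : ℝ := 16 / (η * Real.log 2) + 8 + C' with hc
  have htend : Filter.Tendsto (fun m : ℕ => (m : ℝ) ^ (η / 2)) Filter.atTop Filter.atTop :=
    (tendsto_rpow_atTop (by positivity)).comp tendsto_natCast_atTop_atTop
  obtain ⟨n₁, hn₁⟩ := Filter.eventually_atTop.1 (htend.eventually_ge_atTop (max c 1))
  refine ⟨max n₁ 2, le_max_right _ _, ?_⟩
  intro m hm
  have hm2 : 2 ≤ m := le_trans (le_max_right _ _) hm
  have hm1 : (1 : ℝ) ≤ (m : ℝ) := by exact_mod_cast le_trans one_le_two hm2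
  have hm0 : (0 : ℝ) < (m : ℝ) := by linarith
  have hx : max c 1 ≤ (m : ℝ) ^ (η / 2) := hn₁ m (le_trans (le_max_left _ _) hm)
  have hx1 : (1 : ℝ) ≤ (m : ℝ) ^ (η / 2) := le_trans (le_max_right _ _) hx
  have hxc : c ≤ (m : ℝ) ^ (η / 2) := le_trans (le_max_left _ _) hx
  -- Nat.log bound
  have hk : (Nat.log 2 m : ℝ) ≤ Real.log m / Real.log 2 := by
    have hp : (2 : ℕ) ^ Nat.log 2 m ≤ m := Nat.pow_log_le_self 2 (by omega)
    have hpr : (2 : ℝ) ^ (Nat.log 2 m : ℕ) ≤ (m : ℝ) := by exact_mod_cast hp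
    have := Real.log_le_log (by positivity) hpr
    rw [Real.log_pow] at this
    rw [le_div_iff₀ hlog2]
    exact this
  -- log bound by rpow
  have hlogm : Real.log m ≤ (2 / η) * (m : ℝ) ^ (η / 2) := by
    have h1 : Real.log ((m : ℝ) ^ (η / 2)) = (η / 2) * Real.log m := Real.log_rpow hm0 _
    have h2 : Real.log ((m : ℝ) ^ (η / 2)) ≤ (m : ℝ) ^ (η / 2) := by
      have := Real.log_le_sub_one_of_pos (x := (m : ℝ) ^ (η / 2)) (by positivity)
      linarith
    rw [h1] at h2
    have hsimp : (2 / η) * ((η / 2) * Real.log m) = Real.log m := by field_simp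
    nlinarith [mul_le_mul_of_nonneg_left h2 (le_of_lt (by positivity : (0:ℝ) < 2 / η))]
  have step1 : (8 * ((Nat.log 2 m : ℝ) + 1) + C') ≤ c * (m : ℝ) ^ (η / 2) := by
    have h1 : (8 : ℝ) * ((Nat.log 2 m : ℝ) + 1) + C'
        ≤ 8 * (Real.log m / Real.log 2) + 8 + C' := by
      have := hk; linarith
    have h2 : 8 * (Real.log m / Real.log 2) ≤ (16 / (η * Real.log 2)) * (m : ℝ) ^ (η / 2) := by
      have e1 : 8 * (Real.log (m:ℝ) / Real.log 2) = (8 * Real.log (m:ℝ)) / Real.log 2 := by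
        ring
      have e2 : 16 / (η * Real.log 2) * (m : ℝ) ^ (η / 2)
          = (8 * ((2 / η) * (m : ℝ) ^ (η / 2))) / Real.log 2 := by
        field_simp; ring
      rw [e1, e2]
      gcongr

    have h3 : (8 : ℝ) + C' ≤ (8 + C') * (m : ℝ) ^ (η / 2) := by
      nlinarith [hx1]
    calc (8 : ℝ) * ((Nat.log 2 m : ℝ) + 1) + C'
        ≤ 8 * (Real.log m / Real.log 2) + (8 + C') := by linarith
      _ ≤ (16 / (η * Real.log 2)) * (m : ℝ) ^ (η / 2) + (8 + C') * (m : ℝ) ^ (η / 2) := by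
          linarith
      _ = c * (m : ℝ) ^ (η / 2) := by rw [hc]; ring
  calc (8 * ((Nat.log 2 m : ℝ) + 1) + C') ≤ c * (m : ℝ) ^ (η / 2) := step1
    _ ≤ (m : ℝ) ^ (η / 2) * (m : ℝ) ^ (η / 2) := by nlinarith [hxc, hx1]
    _ = (m : ℝ) ^ η := by
        rw [← Real.rpow_add hm0]; ring_nf

/-- For every `η ∈ (0, 1/2]` there is `n₀` (depending only on `η`) such that for every
simple graph `G`, digraph `H` with `|V(H)| ≥ |V(G)| ≥ n₀`, and linear order `σ` on
`V(G)`, the random `σ`-lexicographic-product instance `D^σ_G[H]` — all orientations in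
condition (ii) chosen independently and uniformly at random — is `η`-good for `(G,H)`
with probability at least `1 - η²` (stated by counting the coin-flip outcomes). -/
theorem stmt4 (η : ℝ) (hη0 : 0 < η) (hη : η ≤ 1 / 2) :
    ∃ n₀ : ℕ, ∀ (α β : Type) [Fintype α] [Fintype β] [DecidableEq α] [DecidableEq β]
      [LinearOrder α] (G : SimpleGraph α) (HA : β → β → Prop),
      (∀ b, ¬ HA b b) →
      n₀ ≤ Fintype.card α → Fintype.card α ≤ Fintype.card β →
      (1 - η ^ 2) * (Fintype.card (α → α → β → β → Bool) : ℝ) ≤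
        ((Finset.univ.filter
            (fun o : α → α → β → β → Bool => EtaGood G (randInst G HA o) η)).card : ℝ) := by
  classical
  obtain ⟨C', hC'⟩ : ∃ C' : ℕ, (1 : ℝ) / 2 ^ C' ≤ η ^ 2 := by
    obtain ⟨k, hk⟩ := exists_pow_lt_of_lt_one (by positivity : (0:ℝ) < η ^ 2)
      (by norm_num : (1:ℝ) / 2 < 1)
    refine ⟨k, ?_⟩
    rw [div_pow, one_pow] at hk
    exact hk.le
  obtain ⟨n₀, hn₀2, hn₀⟩ := exists_n0 η hη0 C'
  refine ⟨n₀, ?_⟩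
  intro α β _ _ _ _ _ G HA hirr hnα hnm
  classical
  set n := Fintype.card α with hndef
  set m := Fintype.card β with hmdef
  have hm2 : 2 ≤ m := le_trans (le_trans hn₀2 hnα) hnm
  have hmR : (2:ℝ) ≤ (m:ℝ) := by exact_mod_cast hm2
  set s := ⌈(m:ℝ) ^ η⌉₊ with hsdef
  have hs1 : 1 ≤ s := Nat.ceil_pos.2 (Real.rpow_pos_of_pos (by linarith) η) |>.nat_succ_le
  have hsm : s ≤ m := by
    apply Nat.ceil_le.2
    calc (m:ℝ) ^ η ≤ (m:ℝ) ^ (1:ℝ) :=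
          Real.rpow_le_rpow_of_exponent_le (by linarith) (by linarith)
      _ = (m:ℝ) := Real.rpow_one _
  set L := Nat.log 2 m + 1 with hLdef
  have hL1 : 1 ≤ L := by omega
  have hsl : 8 * L + C' ≤ s := by
    have h := hn₀ m (le_trans hnα hnm)
    have h2 : ((8 * L + C' : ℕ) : ℝ) ≤ (s:ℝ) := by
      rw [hLdef]
      push_cast
      calc (8 * ((Nat.log 2 m : ℝ) + 1) + C') ≤ (m:ℝ) ^ η := h
        _ ≤ (s:ℝ) := Nat.le_ceil _
    exact_mod_cast h2
  have hkey : L * (6 * s + 2) + C' ≤ s * s := by nlinarith [hsl, hL1, hs1]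
  set M := Fintype.card (α → α → β → β → Bool) with hMdef
  set Bad := Finset.univ.filter
      (fun o : α → α → β → β → Bool => ¬ EtaGood G (randInst G HA o) η) with hBaddef
  set I := ((Finset.univ ×ˢ Finset.univ : Finset (α × α)) ×ˢ
      ((Finset.univ.powersetCard s : Finset (Finset β)) ×ˢ
        (Finset.univ.powersetCard s : Finset (Finset β)))) with hIdef
  set Ev : (α × α) × Finset β × Finset β → Finset (α → α → β → β → Bool) := fun i =>
    Finset.univ.filter (fun o => ∀ x, ¬ Relation.TransGen
      (Cross i.1.1 i.1.2 i.2.1 i.2.2 (fun a b => o i.1.1 i.1.2 a b)) x x) with hEvdef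
  have hsub : Bad ⊆ I.biUnion Ev := by
    intro o ho
    simp only [hBaddef, Finset.mem_filter, Finset.mem_univ, true_and] at ho
    rw [EtaGood] at ho
    push_neg at ho
    obtain ⟨u, v, hadj, Au, Av, hcu, hcv, hAu, hAv, hac⟩ := ho
    have main : ∀ (u v : α) (Au Av : Finset (α × β)), u < v → G.Adj u v →
        (∀ p ∈ Au, p.1 = u) → (∀ p ∈ Av, p.1 = v) →
        (m : ℝ) ^ η ≤ (Au.card : ℝ) → (m : ℝ) ^ η ≤ (Av.card : ℝ) →
        AcyclicSet (randInst G HA o) (↑Au ∪ ↑Av) → o ∈ I.biUnion Ev := by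
      intro u v Au Av hlt hadj hcu hcv hAu hAv hac
      have hsAu : s ≤ Au.card := Nat.ceil_le.2 hAu
      have hsAv : s ≤ Av.card := Nat.ceil_le.2 hAv
      have hTu : s ≤ (Au.image Prod.snd).card := by
        rwa [Finset.card_image_of_injOn (fun p hp q hq hpq =>
          Prod.ext (by rw [hcu p hp, hcu q hq]) hpq)]
      have hTv : s ≤ (Av.image Prod.snd).card := by
        rwa [Finset.card_image_of_injOn (fun p hp q hq hpq =>
          Prod.ext (by rw [hcv p hp, hcv q hq]) hpq)]
      obtain ⟨Su, hSusub, hSucard⟩ := Finset.exists_subset_card_eq hTu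
      obtain ⟨Sv, hSvsub, hSvcard⟩ := Finset.exists_subset_card_eq hTv
      have hSu' : ∀ a ∈ Su, (u, a) ∈ Au := by
        intro a ha
        obtain ⟨p, hp, hpa⟩ := Finset.mem_image.1 (hSusub ha)
        have : p = (u, a) := Prod.ext (hcu p hp) hpa
        rwa [← this]
      have hSv' : ∀ b ∈ Sv, (v, b) ∈ Av := by
        intro b hb
        obtain ⟨p, hp, hpb⟩ := Finset.mem_image.1 (hSvsub hb)
        have : p = (v, b) := Prod.ext (hcv p hp) hpb
        rwa [← this]
      have hcr := cross_of_acyclic G HA o u v hlt hadj Au Av Su Sv hSu' hSv' hac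
      refine Finset.mem_biUnion.2 ⟨((u, v), (Su, Sv)), ?_, ?_⟩
      · simp only [hIdef, Finset.mem_product, Finset.mem_univ, true_and,
          Finset.mem_powersetCard]
        exact ⟨⟨Finset.subset_univ _, hSucard⟩, Finset.subset_univ _, hSvcard⟩
      · simp only [hEvdef, Finset.mem_filter, Finset.mem_univ, true_and]
        exact hcr
    rcases lt_trichotomy u v with hlt | heq | hgt
    · exact main u v Au Av hlt hadj hcu hcv hAu hAv hac
    · exact absurd heq hadj.ne
    · refine main v u Av Au hgt hadj.symm hcv hcu hAv hAu ?_
      rwa [Set.union_comm]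
  have hEvcount : ∀ i ∈ I, (Ev i).card * 2 ^ (s * s) ≤ (2 * s) ^ (2 * s) * M := by
    intro i hi
    simp only [hIdef, Finset.mem_product, Finset.mem_powersetCard] at hi
    exact count_bad i.1.1 i.1.2 i.2.1 i.2.2 s (by omega) hi.2.1.2 hi.2.2.2
  have hIcard : I.card = n * n * (m.choose s * m.choose s) := by
    simp [hIdef, Finset.card_powersetCard, Finset.card_univ, hndef, hmdef]
  have hcount : Bad.card * 2 ^ (s * s) ≤ I.card * ((2 * s) ^ (2 * s) * M) := by
    calc Bad.card * 2 ^ (s * s) ≤ (I.biUnion Ev).card * 2 ^ (s * s) :=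
          Nat.mul_le_mul_right _ (Finset.card_le_card hsub)
      _ ≤ (∑ i ∈ I, (Ev i).card) * 2 ^ (s * s) :=
          Nat.mul_le_mul_right _ Finset.card_biUnion_le
      _ = ∑ i ∈ I, (Ev i).card * 2 ^ (s * s) := Finset.sum_mul _ _ _
      _ ≤ ∑ i ∈ I, (2 * s) ^ (2 * s) * M := Finset.sum_le_sum hEvcount
      _ = I.card * ((2 * s) ^ (2 * s) * M) := by
          rw [Finset.sum_const, smul_eq_mul]
  have hnat : n * n * (m.choose s * m.choose s) * ((2 * s) ^ (2 * s)) * 2 ^ C'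
      ≤ 2 ^ (s * s) := by
    have h2s : 2 * s ≤ m * m := by nlinarith [hsm, hm2]
    have hmL : m ≤ 2 ^ L := (Nat.lt_pow_succ_log_self (by norm_num) m).le
    calc n * n * (m.choose s * m.choose s) * ((2 * s) ^ (2 * s)) * 2 ^ C'
        ≤ m * m * (m ^ s * m ^ s) * ((m * m) ^ (2 * s)) * 2 ^ C' := by
          gcongr <;> first
            | exact hnm
            | exact Nat.choose_le_pow _ _
      _ = m ^ (6 * s + 2) * 2 ^ C' := by ring
      _ ≤ (2 ^ L) ^ (6 * s + 2) * 2 ^ C' := by gcongr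
      _ = 2 ^ (L * (6 * s + 2) + C') := by rw [← pow_mul, ← pow_add]
      _ ≤ 2 ^ (s * s) := Nat.pow_le_pow_right (by norm_num) hkey
  -- combine the counts: Bad.card * 2^C' ≤ M
  have hBadM : Bad.card * 2 ^ C' ≤ M := by
    have h1 : Bad.card * 2 ^ C' * 2 ^ (s * s)
        ≤ (n * n * (m.choose s * m.choose s) * ((2 * s) ^ (2 * s)) * 2 ^ C') * M := by
      calc Bad.card * 2 ^ C' * 2 ^ (s * s)
          = (Bad.card * 2 ^ (s * s)) * 2 ^ C' := by ring
        _ ≤ (I.card * ((2 * s) ^ (2 * s) * M)) * 2 ^ C' :=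
            Nat.mul_le_mul_right _ hcount
        _ = (n * n * (m.choose s * m.choose s) * ((2 * s) ^ (2 * s)) * 2 ^ C') * M := by
            rw [hIcard]; ring
    have h2 : (n * n * (m.choose s * m.choose s) * ((2 * s) ^ (2 * s)) * 2 ^ C') * M
        ≤ 2 ^ (s * s) * M := Nat.mul_le_mul_right _ hnat
    have h3 : Bad.card * 2 ^ C' * 2 ^ (s * s) ≤ M * 2 ^ (s * s) := by
      calc Bad.card * 2 ^ C' * 2 ^ (s * s) ≤ 2 ^ (s * s) * M := le_trans h1 h2
        _ = M * 2 ^ (s * s) := Nat.mul_comm _ _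
    exact Nat.le_of_mul_le_mul_right h3 (Nat.pow_pos (by norm_num))
  -- real arithmetic conclusion
  have hBadR : (Bad.card : ℝ) ≤ η ^ 2 * M := by
    have h1 : (Bad.card : ℝ) * 2 ^ C' ≤ M := by exact_mod_cast hBadM
    have h2 : (0:ℝ) < 2 ^ C' := by positivity
    have h3 : (Bad.card : ℝ) ≤ M * (1 / 2 ^ C') := by
      rw [mul_one_div, le_div_iff₀ h2]
      exact h1

    calc (Bad.card : ℝ) ≤ M * (1 / 2 ^ C') := h3
      _ ≤ M * η ^ 2 := by
          apply mul_le_mul_of_nonneg_left hC' (by positivity)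
      _ = η ^ 2 * M := mul_comm _ _
  have hsplit : (Finset.univ.filter
      (fun o : α → α → β → β → Bool => EtaGood G (randInst G HA o) η)).card + Bad.card
      = M := by
    rw [hBaddef, hMdef]
    rw [Finset.card_filter_add_card_filter_not]
    exact Finset.card_univ
  have hsplitR : ((Finset.univ.filter
      (fun o : α → α → β → β → Bool => EtaGood G (randInst G HA o) η)).card : ℝ)
      = M - Bad.card := by
    have := hsplit
    push_cast [← this]
    ring
  rw [hsplitR]
  have hM0 : (0:ℝ) ≤ M := by positivity
  nlinarith [hBadR, hM0]
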